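/- For an integer m > 0 and a weakly increasing tuple λ ∈ ℕ^m, the number of semistandard Young tableaux of shape λ on alphabet [m] equals V(λ+δ)/V(δ), where δ = (0,1,...,m-1) and V(x) = ∏_{1≤i<j≤m}(x_j - x_i). -/

import Mathlib

/-- A semistandard Young tableau (in the paper's convention) of shape `lam`
(weakly increasing row lengths, rows indexed bottom to top) on alphabet `Fin m`:
entries weakly decrease along each row from left to right, and strictly
decrease from top to bottom along each column. -/
def IsSSYT {m : ℕ} (lam : Fin m → ℕ) (T : (i : Fin m) → Fin (lam i) → Fin m) : Prop :=
  (∀ (i : Fin m) (j j' : Fin (lam i)), j ≤ j' → T i j' ≤ T i j) ∧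
  (∀ (i i' : Fin m), i < i' → ∀ (j : Fin (lam i)) (j' : Fin (lam i')),
      (j : ℕ) = (j' : ℕ) → T i j < T i' j')

/-- The number of cells of the tableau `T` whose entry is the letter `k`. -/
def cellCount {m : ℕ} (lam : Fin m → ℕ)
    (T : (i : Fin m) → Fin (lam i) → Fin m) (k : Fin m) : ℕ :=
  ∑ i : Fin m, (Finset.univ.filter fun j : Fin (lam i) => T i j = k).card

open scoped Classical in
/-- The Schur polynomial of shape `lam` evaluated at `u`, defined combinatorially
(Littlewood's definition) as the sum over all semistandard Young tableaux of
shape `lam` on alphabet `[m]` of the monomial `∏ k, u k ^ (number of k's in T)`. -/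
noncomputable def schur {m : ℕ} (lam : Fin m → ℕ) (u : Fin m → ℝ) : ℝ :=
  ∑ T ∈ Finset.univ.filter (IsSSYT lam), ∏ k : Fin m, u k ^ cellCount lam T k


open Finset

lemma real_faulhaber (n p : ℕ) :
    (∑ t ∈ Finset.range n, (t : ℝ) ^ p)
      = ∑ k ∈ Finset.range (p + 1),
          ((bernoulli (p - k) * ((p + 1).choose (p - k)) / (p + 1) : ℚ) : ℝ) * (n : ℝ) ^ (k + 1) := by
  have h := sum_range_pow n p
  have h2 : (∑ k ∈ Finset.range (p + 1),
        (bernoulli (p - k) * ((p + 1).choose (p - k)) * (n : ℚ) ^ (k + 1) / (p + 1)))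
      = ∑ i ∈ Finset.range (p + 1),
          bernoulli i * ((p + 1).choose i) * (n : ℚ) ^ (p + 1 - i) / (p + 1) := by
    rw [← Finset.sum_range_reflect]
    refine Finset.sum_congr rfl fun k hk => ?_
    simp only [Finset.mem_range] at hk
    have e1 : p - (p - k) = k := by omega
    have e2 : p + 1 - k = p - k + 1 := by omega
    have e0 : p + 1 - 1 - k = p - k := by omega
    rw [e0, e1, e2]
  rw [← h2] at h
  have : (∑ t ∈ Finset.range n, (t : ℝ) ^ p) = ((∑ t ∈ Finset.range n, (t : ℚ) ^ p : ℚ) : ℝ) := by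
    push_cast; rfl
  rw [this, h]
  push_cast
  refine Finset.sum_congr rfl fun k hk => ?_
  ring

lemma prod_fin_add_one_eq_factorial (m : ℕ) :
    (∏ j : Fin m, ((j : ℕ) + 1 : ℝ)) = (m.factorial : ℝ) := by
  rw [Fin.prod_univ_eq_prod_range (fun j => ((j : ℕ) + 1 : ℝ))]
  rw [← Finset.prod_range_add_one_eq_factorial]
  push_cast
  rfl

lemma sum_range_eq_sum_fin {M : Type*} [AddCommMonoid M] (m c : ℕ) (hc : c ≤ m) (f : ℕ → M) :
    ∑ k ∈ Finset.range c, f k = ∑ k : Fin m, if (k : ℕ) < c then f (k : ℕ) else 0 := by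
  rw [Fin.sum_univ_eq_sum_range (fun k => if k < c then f k else 0) m]
  rw [← Finset.sum_subset (Finset.range_subset_range.2 hc)
    (fun x _ hx => if_neg (by simpa using hx))]
  exact Finset.sum_congr rfl (fun x hx => (if_pos (Finset.mem_range.1 hx)).symm)

lemma sum_vandermonde_nat (m : ℕ) (a : Fin (m + 1) → ℕ)
    (ha : ∀ i : Fin m, a i.castSucc ≤ a i.succ) :
    (∑ b ∈ Fintype.piFinset (fun i : Fin m => Finset.Ico (a i.castSucc) (a i.succ)),
        ∏ i : Fin m, ∏ j ∈ Finset.Ioi i, ((b j : ℝ) - (b i : ℝ))) * (m.factorial : ℝ)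
      = ∏ i : Fin (m + 1), ∏ j ∈ Finset.Ioi i, ((a j : ℝ) - (a i : ℝ)) := by
  classical
  set N : Matrix (Fin m) (Fin m) ℝ :=
    Matrix.of fun i j => ∑ t ∈ Finset.Ico (a i.castSucc) (a i.succ), (t : ℝ) ^ (j : ℕ) with hN
  -- Step 1 : the sum of Vandermonde determinants is det N
  have step1 : (∑ b ∈ Fintype.piFinset (fun i : Fin m => Finset.Ico (a i.castSucc) (a i.succ)),
      ∏ i : Fin m, ∏ j ∈ Finset.Ioi i, ((b j : ℝ) - (b i : ℝ))) = N.det := by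
    have hrows : (fun i => N i) = fun i => ∑ t ∈ Finset.Ico (a i.castSucc) (a i.succ),
        (fun j : Fin m => (t : ℝ) ^ (j : ℕ)) := by
      funext i
      funext j
      simp [hN, Finset.sum_apply]
    have hdet : N.det = (Matrix.detRowAlternating (R := ℝ) (n := Fin m)).toMultilinearMap
        (fun i => ∑ t ∈ Finset.Ico (a i.castSucc) (a i.succ),
          (fun j : Fin m => (t : ℝ) ^ (j : ℕ))) := by
      rw [← hrows]; rfl
    rw [hdet, MultilinearMap.map_sum_finset]
    refine (Finset.sum_congr rfl fun b _ => ?_).symm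
    have : (Matrix.detRowAlternating (R := ℝ) (n := Fin m)).toMultilinearMap
        (fun i => fun j : Fin m => ((b i : ℝ)) ^ (j : ℕ))
        = (Matrix.vandermonde (fun i : Fin m => (b i : ℝ))).det := rfl
    rw [this, Matrix.det_vandermonde]
  -- the coefficient matrix from Faulhaber's formula
  set C : Matrix (Fin m) (Fin m) ℝ := Matrix.of fun k j : Fin m =>
    if (k : ℕ) ≤ (j : ℕ) then
      ((bernoulli ((j : ℕ) - (k : ℕ)) * (((j : ℕ) + 1).choose ((j : ℕ) - (k : ℕ)))
        / ((j : ℕ) + 1) : ℚ) : ℝ)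
    else 0 with hC
  set D : Matrix (Fin m) (Fin m) ℝ := Matrix.of fun i k : Fin m =>
    ((a i.succ : ℝ) ^ ((k : ℕ) + 1) - (a i.castSucc : ℝ) ^ ((k : ℕ) + 1)) with hD
  -- Step 2 : N = D * C
  have step2 : N = D * C := by
    ext i j
    rw [Matrix.mul_apply]
    have hIco : ∑ t ∈ Finset.Ico (a i.castSucc) (a i.succ), (t : ℝ) ^ (j : ℕ)
        = (∑ t ∈ Finset.range (a i.succ), (t : ℝ) ^ (j : ℕ))
          - ∑ t ∈ Finset.range (a i.castSucc), (t : ℝ) ^ (j : ℕ) :=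
      Finset.sum_Ico_eq_sub _ (ha i)
    have expand : N i j = ∑ k ∈ Finset.range ((j : ℕ) + 1),
        ((bernoulli ((j : ℕ) - k) * (((j : ℕ) + 1).choose ((j : ℕ) - k)) / ((j : ℕ) + 1) : ℚ) : ℝ)
          * ((a i.succ : ℝ) ^ (k + 1) - (a i.castSucc : ℝ) ^ (k + 1)) := by
      show (∑ t ∈ Finset.Ico (a i.castSucc) (a i.succ), (t : ℝ) ^ (j : ℕ)) = _
      rw [hIco, real_faulhaber, real_faulhaber, ← Finset.sum_sub_distrib]
      refine Finset.sum_congr rfl fun k _ => ?_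
      ring
    rw [expand]
    rw [sum_range_eq_sum_fin m ((j : ℕ) + 1) (by omega)
      (fun k => ((bernoulli ((j : ℕ) - k) * (((j : ℕ) + 1).choose ((j : ℕ) - k))
        / ((j : ℕ) + 1) : ℚ) : ℝ)
          * ((a i.succ : ℝ) ^ (k + 1) - (a i.castSucc : ℝ) ^ (k + 1)))]
    refine Finset.sum_congr rfl fun k _ => ?_
    by_cases h : (k : ℕ) ≤ (j : ℕ)
    · rw [if_pos (by omega)]
      simp only [hC, hD, Matrix.of_apply, if_pos h]
      ring
    · rw [if_neg (by omega)]
      simp only [hC, hD, Matrix.of_apply, if_neg h]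
      ring
  -- Step 3 : det C = 1 / m!
  have step3 : C.det = (m.factorial : ℝ)⁻¹ := by
    have htri : C.BlockTriangular id := by
      intro k j hkj
      have hkj' : (j : ℕ) < (k : ℕ) := hkj
      have : ¬ ((k : ℕ) ≤ (j : ℕ)) := by omega
      simp only [hC, Matrix.of_apply]
      rw [if_neg this]
    rw [Matrix.det_of_upperTriangular htri]
    have hdiag : ∀ j : Fin m, C j j = (((j : ℕ) : ℝ) + 1)⁻¹ := by
      intro j
      simp only [hC, Matrix.of_apply, if_pos (le_refl (j : ℕ)), Nat.sub_self,
        bernoulli_zero, Nat.choose_zero_right]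
      push_cast
      ring
    rw [Finset.prod_congr rfl fun j _ => hdiag j, ← prod_fin_add_one_eq_factorial m]
    exact Finset.prod_inv_distrib _
  -- Step 4 : det D = Vandermonde of a
  have step4 : D.det = ∏ i : Fin (m + 1), ∏ j ∈ Finset.Ioi i, ((a j : ℝ) - (a i : ℝ)) := by
    set B : Matrix (Fin (m + 1)) (Fin (m + 1)) ℝ := Matrix.of fun i j =>
      (Fin.cases ((a 0 : ℝ) ^ (j : ℕ))
        (fun i' => (a i'.succ : ℝ) ^ (j : ℕ) - (a i'.castSucc : ℝ) ^ (j : ℕ)) i : ℝ) with hB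
    have hVB : (Matrix.vandermonde (fun i : Fin (m + 1) => (a i : ℝ))).det = B.det := by
      refine Matrix.det_eq_of_forall_row_eq_smul_add_pred (c := fun _ => 1) ?_ ?_
      · intro j; simp [hB, Matrix.vandermonde]
      · intro i j; simp [hB, Matrix.vandermonde]
    have hBD : B.det = D.det := by
      rw [Matrix.det_succ_column_zero]
      rw [Finset.sum_eq_single_of_mem 0 (Finset.mem_univ _)]
      · have h00 : B 0 0 = 1 := by simp [hB]
        have hsub : B.submatrix (Fin.succAbove 0) Fin.succ = D := by
          ext i k
          simp [hB, hD, Fin.succAbove_zero, Fin.cases_succ]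
        rw [h00, hsub]
        simp
      · intro i _ hi
        rcases Fin.eq_succ_of_ne_zero hi with ⟨i', rfl⟩
        simp [hB]
    rw [← Matrix.det_vandermonde, hVB, hBD]
  rw [step1, step2, Matrix.det_mul, step3, ← step4]
  have hfac : (m.factorial : ℝ) ≠ 0 := by positivity
  field_simp

open Finset

/-- column strictness follows from consecutive-row strictness (for monotone shapes) -/
lemma col_strict_of_consec {m : ℕ} (lam : Fin m → ℕ) (hlam : Monotone lam)
    (T : (i : Fin m) → Fin (lam i) → Fin m)
    (h : ∀ (i i' : Fin m), (i' : ℕ) = (i : ℕ) + 1 →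
      ∀ (j : Fin (lam i)) (j' : Fin (lam i')), (j : ℕ) = (j' : ℕ) → T i j < T i' j') :
    ∀ (i i' : Fin m), i < i' → ∀ (j : Fin (lam i)) (j' : Fin (lam i')),
      (j : ℕ) = (j' : ℕ) → T i j < T i' j' := by
  have key : ∀ d (i i' : Fin m), (i' : ℕ) = (i : ℕ) + d + 1 →
      ∀ (j : Fin (lam i)) (j' : Fin (lam i')), (j : ℕ) = (j' : ℕ) → T i j < T i' j' := by
    intro d
    induction d with
    | zero => exact fun i i' hii => h i i' (by omega)
    | succ d ih =>
      intro i i' hii j j' hj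
      have hi'' : (i : ℕ) + d + 1 < m := by have := i'.isLt; omega
      set i'' : Fin m := ⟨(i : ℕ) + d + 1, hi''⟩ with hi''def
      have hij : (j : ℕ) < lam i'' := lt_of_lt_of_le j.isLt (hlam (by
        show i ≤ i''
        rw [Fin.le_def]
        simp only [hi''def]
        omega))
      exact lt_trans (ih i i'' (by simp [hi''def]) j ⟨(j : ℕ), hij⟩ rfl)
        (h i'' i' (by simp [hi''def]; omega) ⟨(j : ℕ), hij⟩ j' hj)
  intro i i' hii' j j' hj
  exact key ((i' : ℕ) - (i : ℕ) - 1) i i' (by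
    have : (i : ℕ) < (i' : ℕ) := hii'
    omega) j j' hj

/-- in an SSYT on `[m]` with monotone shape, the entries of row `i` are at most `i` -/
lemma ssyt_entry_le {m : ℕ} {lam : Fin m → ℕ} (hlam : Monotone lam)
    {T : (i : Fin m) → Fin (lam i) → Fin m} (hT : IsSSYT lam T) :
    ∀ (i : Fin m) (j : Fin (lam i)), (T i j : ℕ) ≤ (i : ℕ) := by
  have key : ∀ d (i : Fin m) (j : Fin (lam i)), (i : ℕ) + d = m - 1 →
      (T i j : ℕ) + d ≤ m - 1 := by
    intro d
    induction d with
    | zero =>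
      intro i j _
      have := (T i j).isLt
      have := i.isLt
      omega
    | succ d ih =>
      intro i j hi
      have hlt : (i : ℕ) + 1 < m := by have := i.isLt; omega
      set i' : Fin m := ⟨(i : ℕ) + 1, hlt⟩ with hi'def
      have hij : (j : ℕ) < lam i' := lt_of_lt_of_le j.isLt (hlam (by
        show i ≤ i'
        rw [Fin.le_def]; simp [hi'def]))
      have h1 : T i j < T i' ⟨(j : ℕ), hij⟩ :=
        hT.2 i i' (by rw [Fin.lt_def]; simp [hi'def]) j ⟨(j : ℕ), hij⟩ rfl
      have h2 := ih i' ⟨(j : ℕ), hij⟩ (by simp [hi'def]; omega)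
      have h1' : (T i j : ℕ) < (T i' ⟨(j : ℕ), hij⟩ : ℕ) := h1
      omega
  intro i j
  have := i.isLt
  have := key (m - 1 - (i : ℕ)) i j (by omega)
  omega

lemma card_filter_val_lt {n : ℕ} (c : ℕ) (hc : c ≤ n) :
    ((Finset.univ.filter fun j : Fin n => (j : ℕ) < c).card) = c := by
  classical
  rw [← Finset.card_range c]
  apply Finset.card_bij (fun (j : Fin n) _ => (j : ℕ))
  · intro j hj
    simp only [Finset.mem_filter] at hj
    simpa using hj.2
  · intro j hj j' hj' hjj
    exact Fin.ext hjj
  · intro k hk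
    simp only [Finset.mem_range] at hk
    exact ⟨⟨k, lt_of_lt_of_le hk hc⟩, by simp [hk], rfl⟩

/-- prefix property for a weakly decreasing row -/
lemma prefix_ne_zero {n N : ℕ} (f : Fin n → Fin (N + 1))
    (hf : ∀ j j' : Fin n, j ≤ j' → f j' ≤ f j) (j : Fin n) :
    f j ≠ 0 ↔ (j : ℕ) < (Finset.univ.filter fun j => f j ≠ 0).card := by
  classical
  constructor
  · intro hj
    have hsub : (Finset.univ.filter fun j' : Fin n => (j' : ℕ) < (j : ℕ) + 1)
        ⊆ (Finset.univ.filter fun j' => f j' ≠ 0) := by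
      intro j'' hj''
      simp only [Finset.mem_filter, Finset.mem_univ, true_and] at hj'' ⊢
      intro hzero
      have hle : f j ≤ f j'' := hf j'' j (by rw [Fin.le_def]; omega)
      rw [hzero] at hle
      exact hj (Fin.le_zero_iff.mp hle)
    have := Finset.card_le_card hsub
    rw [card_filter_val_lt ((j : ℕ) + 1) j.isLt] at this
    omega
  · intro hlt
    rcases Decidable.eq_or_ne (f j) 0 with hj | hj
    · exfalso
      have hsub : (Finset.univ.filter fun j' : Fin n => f j' ≠ 0)
          ⊆ (Finset.univ.filter fun j' : Fin n => (j' : ℕ) < (j : ℕ)) := by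
        intro j'' hj''
        simp only [Finset.mem_filter, Finset.mem_univ, true_and] at hj'' ⊢
        by_contra hge
        push_neg at hge
        have hle : f j'' ≤ f j := hf j j'' (by rw [Fin.le_def]; omega)
        rw [hj] at hle
        exact hj'' (Fin.le_zero_iff.mp hle)
      have := Finset.card_le_card hsub
      rw [card_filter_val_lt (j : ℕ) (le_of_lt j.isLt)] at this
      omega
    · exact hj

section Strip

open scoped Classical

variable {m : ℕ} (lam : Fin (m + 1) → ℕ)

/-- the shape of the subtableau of nonzero entries (shifted down a row) -/
noncomputable def shapeOf (T : (i : Fin (m + 1)) → Fin (lam i) → Fin (m + 1)) (i : Fin m) : ℕ :=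
  (Finset.univ.filter fun j : Fin (lam i.succ) => T i.succ j ≠ 0).card

/-- add a bottom row of zeros and shift all entries up by one -/
def raiseT (lam' : Fin m → ℕ) (T' : (i : Fin m) → Fin (lam' i) → Fin m) :
    (i : Fin (m + 1)) → Fin (lam i) → Fin (m + 1) := fun i =>
  Fin.cases (motive := fun i => Fin (lam i) → Fin (m + 1))
    (fun _ => 0)
    (fun i' j => if h : (j : ℕ) < lam' i' then (T' i' ⟨(j : ℕ), h⟩).succ else 0) i

/-- delete the bottom row and decrease all entries by one -/
def stripT (lam' : Fin m → ℕ) (hle : ∀ i, lam' i ≤ lam i.succ)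
    (T : (i : Fin (m + 1)) → Fin (lam i) → Fin (m + 1)) :
    (i : Fin m) → Fin (lam' i) → Fin m := fun i j =>
  ⟨(T i.succ ⟨(j : ℕ), lt_of_lt_of_le j.isLt (hle i)⟩ : ℕ) - 1, by
    have h1 := (T i.succ ⟨(j : ℕ), lt_of_lt_of_le j.isLt (hle i)⟩).isLt
    have h2 := i.isLt
    omega⟩

lemma raise_zero (lam' : Fin m → ℕ) (T' : (i : Fin m) → Fin (lam' i) → Fin m)
    (j : Fin (lam 0)) : raiseT lam lam' T' 0 j = 0 := rfl

lemma raise_succ (lam' : Fin m → ℕ) (T' : (i : Fin m) → Fin (lam' i) → Fin m)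
    (i : Fin m) (j : Fin (lam i.succ)) :
    raiseT lam lam' T' i.succ j
      = if h : (j : ℕ) < lam' i then (T' i ⟨(j : ℕ), h⟩).succ else 0 := by
  simp [raiseT]

end Strip

section Rec

open scoped Classical
open Finset

variable {m : ℕ} {lam : Fin (m + 1) → ℕ}

lemma shape_mem (hlam : Monotone lam) {T : (i : Fin (m + 1)) → Fin (lam i) → Fin (m + 1)}
    (hT : IsSSYT lam T) (i : Fin m) :
    lam i.castSucc ≤ shapeOf lam T i ∧ shapeOf lam T i ≤ lam i.succ := by
  constructor
  · have hsub : (univ.filter fun j : Fin (lam i.succ) => (j : ℕ) < lam i.castSucc)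
        ⊆ (univ.filter fun j => T i.succ j ≠ 0) := by
      intro j hj
      simp only [mem_filter, mem_univ, true_and] at hj ⊢
      have hcol := hT.2 i.castSucc i.succ (Fin.castSucc_lt_succ (i := i)) ⟨(j : ℕ), hj⟩ j rfl
      intro h0
      rw [h0] at hcol
      exact absurd hcol (by simp)
    have h1 := Finset.card_le_card hsub
    rwa [card_filter_val_lt (lam i.castSucc) (hlam (Fin.castSucc_lt_succ (i := i)).le)] at h1
  · exact le_trans (Finset.card_filter_le _ _) (by simp)

lemma strip_isSSYT (hlam : Monotone lam) {lam' : Fin m → ℕ} (hle : ∀ i, lam' i ≤ lam i.succ)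
    {T : (i : Fin (m + 1)) → Fin (lam i) → Fin (m + 1)} (hT : IsSSYT lam T)
    (hsh : ∀ i, shapeOf lam T i = lam' i) :
    IsSSYT lam' (stripT lam lam' hle T) := by
  have hne : ∀ (i : Fin m) (j : ℕ) (hj : j < lam' i),
      (T i.succ ⟨j, lt_of_lt_of_le hj (hle i)⟩ : ℕ) ≠ 0 := by
    intro i j hj
    have h := (prefix_ne_zero (f := fun j => T i.succ j)
      (fun a b hab => hT.1 i.succ a b hab) ⟨j, lt_of_lt_of_le hj (hle i)⟩).mpr
    have hcard : (j : ℕ) < (Finset.univ.filter fun j => T i.succ j ≠ 0).card := by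
      have : (Finset.univ.filter fun j => T i.succ j ≠ 0).card = lam' i := hsh i
      omega
    intro h0
    exact (h hcard) (Fin.ext h0)
  constructor
  · intro i j j' hjj
    rw [Fin.le_def]
    simp only [stripT]
    have h1 : (T i.succ ⟨(j' : ℕ), lt_of_lt_of_le j'.isLt (hle i)⟩ : ℕ)
        ≤ (T i.succ ⟨(j : ℕ), lt_of_lt_of_le j.isLt (hle i)⟩ : ℕ) :=
      hT.1 i.succ _ _ (by rw [Fin.le_def]; exact hjj)
    omega
  · intro i i' hii j j' hjj
    rw [Fin.lt_def]
    simp only [stripT]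
    have hcol : (T i.succ ⟨(j : ℕ), lt_of_lt_of_le j.isLt (hle i)⟩ : ℕ)
        < (T i'.succ ⟨(j' : ℕ), lt_of_lt_of_le j'.isLt (hle i')⟩ : ℕ) :=
      hT.2 i.succ i'.succ (by rw [Fin.lt_def]; simp only [Fin.val_succ]; exact Nat.add_lt_add_right hii 1) _ _ hjj
    have h0 := hne i (j : ℕ) j.isLt
    omega

lemma raise_isSSYT (hlam : Monotone lam) {lam' : Fin m → ℕ}
    (hlo : ∀ i, lam i.castSucc ≤ lam' i) (hhi : ∀ i, lam' i ≤ lam i.succ)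
    {T' : (i : Fin m) → Fin (lam' i) → Fin m} (hT' : IsSSYT lam' T') :
    IsSSYT lam (raiseT lam lam' T') := by
  constructor
  · intro i
    induction i using Fin.cases with
    | zero =>
      intro j j' _
      rw [raise_zero, raise_zero]
    | succ i' =>
      intro j j' hjj
      rw [raise_succ, raise_succ]
      by_cases h' : (j' : ℕ) < lam' i'
      · have h : (j : ℕ) < lam' i' := lt_of_le_of_lt (by exact_mod_cast hjj) h'
        rw [dif_pos h, dif_pos h']
        rw [Fin.succ_le_succ_iff]
        exact hT'.1 i' _ _ (by rw [Fin.le_def]; exact hjj)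
      · rw [dif_neg h']
        exact Fin.zero_le _
  · apply col_strict_of_consec lam hlam
    intro i i' hii j j' hjj
    have hi'0 : i' ≠ 0 := by
      intro h
      rw [h] at hii
      simp at hii
    rcases Fin.eq_succ_of_ne_zero hi'0 with ⟨k, rfl⟩
    rw [raise_succ]
    rcases Fin.eq_zero_or_eq_succ i with rfl | ⟨k₂, rfl⟩
    · have hk0 : k.castSucc = (0 : Fin (m + 1)) := by
        apply Fin.ext
        simp only [Fin.coe_castSucc, Fin.val_zero]
        simp only [Fin.val_succ, Fin.val_zero] at hii
        omega
      have hj' : (j' : ℕ) < lam' k := by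
        have h1 : (j : ℕ) < lam 0 := j.isLt
        have h2 : lam 0 ≤ lam' k := hk0 ▸ hlo k
        omega
      rw [dif_pos hj']
      rw [raise_zero]
      exact Fin.succ_pos _
    · have hkk : k₂.succ = k.castSucc := by
        apply Fin.ext
        simp only [Fin.val_succ, Fin.coe_castSucc]
        simp only [Fin.val_succ] at hii
        omega
      have hj' : (j' : ℕ) < lam' k := by
        have h1 : (j : ℕ) < lam k₂.succ := j.isLt
        have h2 : lam k₂.succ ≤ lam' k := hkk ▸ hlo k
        omega
      rw [dif_pos hj']
      rw [raise_succ]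
      by_cases h : (j : ℕ) < lam' k₂
      · rw [dif_pos h]
        rw [Fin.succ_lt_succ_iff]
        refine hT'.2 k₂ k ?_ _ _ (by simp [hjj])
        rw [Fin.lt_def]
        simp only [Fin.val_succ] at hii
        omega
      · rw [dif_neg h]
        exact Fin.succ_pos _

lemma shape_raise {lam' : Fin m → ℕ} (hhi : ∀ i, lam' i ≤ lam i.succ)
    (T' : (i : Fin m) → Fin (lam' i) → Fin m) (i : Fin m) :
    shapeOf lam (raiseT lam lam' T') i = lam' i := by
  unfold shapeOf
  have hiff : ∀ j : Fin (lam i.succ), (raiseT lam lam' T' i.succ j ≠ 0) ↔ (j : ℕ) < lam' i := by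
    intro j
    rw [raise_succ]
    by_cases h : (j : ℕ) < lam' i
    · simp [dif_pos h, h, Fin.succ_ne_zero]
    · simp [dif_neg h, h]
  rw [Finset.filter_congr (fun j _ => by rw [hiff j])]
  exact card_filter_val_lt _ (hhi i)

end Rec

section Rec2

open scoped Classical
open Finset

variable {m : ℕ} {lam : Fin (m + 1) → ℕ}

lemma raise_strip (hlam : Monotone lam) {lam' : Fin m → ℕ} (hle : ∀ i, lam' i ≤ lam i.succ)
    {T : (i : Fin (m + 1)) → Fin (lam i) → Fin (m + 1)} (hT : IsSSYT lam T)
    (hsh : ∀ i, shapeOf lam T i = lam' i) :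
    raiseT lam lam' (stripT lam lam' hle T) = T := by
  funext i j
  have hprefix : ∀ (i' : Fin m) (jj : Fin (lam i'.succ)),
      T i'.succ jj ≠ 0 ↔ (jj : ℕ) < lam' i' := by
    intro i' jj
    rw [prefix_ne_zero (f := fun j => T i'.succ j)
      (fun a b hab => hT.1 i'.succ a b hab) jj]
    have h : (Finset.univ.filter fun j => T i'.succ j ≠ 0).card = lam' i' := hsh i'
    rw [h]
  rcases Fin.eq_zero_or_eq_succ i with rfl | ⟨i', rfl⟩
  · rw [raise_zero]
    apply Fin.ext
    have := ssyt_entry_le hlam hT 0 j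
    simp only [Fin.val_zero] at this ⊢
    omega
  · rw [raise_succ]
    by_cases h : (j : ℕ) < lam' i'
    · rw [dif_pos h]
      apply Fin.ext
      simp only [Fin.val_succ, stripT, Fin.eta]
      have hne : T i'.succ j ≠ 0 := (hprefix i' j).mpr h
      have hne' : (T i'.succ j : ℕ) ≠ 0 := fun h0 => hne (Fin.ext h0)
      omega
    · rw [dif_neg h]
      apply Fin.ext
      have h0 : T i'.succ j = 0 := by
        by_contra hne
        exact h ((hprefix i' j).mp hne)
      rw [h0]

lemma strip_raise {lam' : Fin m → ℕ} (hle : ∀ i, lam' i ≤ lam i.succ)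
    (T' : (i : Fin m) → Fin (lam' i) → Fin m) :
    stripT lam lam' hle (raiseT lam lam' T') = T' := by
  funext i j
  apply Fin.ext
  simp only [stripT]
  rw [raise_succ]
  rw [dif_pos (show ((⟨(j : ℕ), lt_of_lt_of_le j.isLt (hle i)⟩ : Fin (lam i.succ)) : ℕ) < lam' i from j.isLt)]
  simp [Fin.eta]

end Rec2

open scoped Classical in
lemma card_ssyt_zero (lam : Fin 0 → ℕ) :
    (Finset.univ.filter (IsSSYT lam)).card = 1 := by
  have hall : ∀ T : (i : Fin 0) → Fin (lam i) → Fin 0, IsSSYT lam T :=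
    fun T => ⟨fun i => i.elim0, fun i => i.elim0⟩
  rw [Finset.filter_true_of_mem (fun T _ => hall T), Finset.card_univ]
  simp [Fintype.card_pi]

open scoped Classical in
lemma card_ssyt_rec {m : ℕ} (lam : Fin (m + 1) → ℕ) (hlam : Monotone lam) :
    (Finset.univ.filter (IsSSYT lam)).card
      = ∑ lam' ∈ Fintype.piFinset (fun i : Fin m =>
          Finset.Icc (lam i.castSucc) (lam i.succ)),
          (Finset.univ.filter (IsSSYT lam')).card := by
  rw [Finset.card_eq_sum_card_fiberwise (f := shapeOf lam)
    (t := Fintype.piFinset fun i : Fin m => Finset.Icc (lam i.castSucc) (lam i.succ))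
    (fun T hT => by
      simp only [Finset.mem_coe, Finset.mem_filter, Finset.mem_univ, true_and] at hT
      rw [Finset.mem_coe, Fintype.mem_piFinset]
      intro i
      rw [Finset.mem_Icc]
      exact shape_mem hlam hT i)]
  refine Finset.sum_congr rfl fun lam' hlam' => ?_
  rw [Fintype.mem_piFinset] at hlam'
  have hlo : ∀ i, lam i.castSucc ≤ lam' i := fun i => (Finset.mem_Icc.mp (hlam' i)).1
  have hhi : ∀ i, lam' i ≤ lam i.succ := fun i => (Finset.mem_Icc.mp (hlam' i)).2
  refine Finset.card_bij' (fun T _ => stripT lam lam' hhi T)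
    (fun T' _ => raiseT lam lam' T') ?_ ?_ ?_ ?_
  · intro T hT
    simp only [Finset.mem_filter, Finset.mem_univ, true_and] at hT ⊢
    exact strip_isSSYT hlam hhi hT.1 (fun i => congrFun hT.2 i)
  · intro T' hT'
    simp only [Finset.mem_filter, Finset.mem_univ, true_and] at hT' ⊢
    exact ⟨raise_isSSYT hlam hlo hhi hT', funext fun i => shape_raise hhi T' i⟩
  · intro T hT
    simp only [Finset.mem_filter, Finset.mem_univ, true_and] at hT
    exact raise_strip hlam hhi hT.1 (fun i => congrFun hT.2 i)
  · intro T' _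
    exact strip_raise hhi T'

lemma Ioi_zero_eq_map' (m : ℕ) :
    Finset.Ioi (0 : Fin (m + 1)) = Finset.univ.map (Fin.succEmb m) := by
  ext j
  simp only [Finset.mem_Ioi, Finset.mem_map, Finset.mem_univ, true_and]
  constructor
  · intro hj
    rcases Fin.eq_zero_or_eq_succ j with rfl | ⟨k, rfl⟩
    · exact absurd hj (lt_irrefl _)
    · exact ⟨k, rfl⟩
  · rintro ⟨k, rfl⟩
    exact Fin.succ_pos k

lemma Ioi_succ_eq_map' {m : ℕ} (i : Fin m) :
    Finset.Ioi i.succ = (Finset.Ioi i).map (Fin.succEmb m) := by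
  ext j
  simp only [Finset.mem_Ioi, Finset.mem_map, Finset.mem_univ, true_and]
  constructor
  · intro hj
    rcases Fin.eq_zero_or_eq_succ j with rfl | ⟨k, rfl⟩
    · exact absurd (lt_trans (Fin.succ_pos i) hj) (lt_irrefl _)
    · refine ⟨k, ?_, rfl⟩
      have hj' : (i : ℕ) + 1 < (k : ℕ) + 1 := hj
      exact (by omega : (i : ℕ) < (k : ℕ))
  · rintro ⟨k, hk, rfl⟩
    have hk' : (i : ℕ) < (k : ℕ) := hk
    show (i : ℕ) + 1 < (k : ℕ) + 1
    omega

lemma superfact_succ (m : ℕ) :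
    (∏ i : Fin (m + 1), ∏ j ∈ Finset.Ioi i, (((j : ℕ) : ℝ) - ((i : ℕ) : ℝ)))
      = (∏ i : Fin m, ∏ j ∈ Finset.Ioi i, (((j : ℕ) : ℝ) - ((i : ℕ) : ℝ))) * (m.factorial : ℝ) := by
  rw [Fin.prod_univ_succ]
  rw [mul_comm]
  congr 1
  · refine Finset.prod_congr rfl fun i _ => ?_
    rw [Ioi_succ_eq_map', Finset.prod_map]
    refine Finset.prod_congr rfl fun j _ => ?_
    simp only [Fin.coe_succEmb]
    push_cast [Fin.val_succ]
    ring
  · rw [Ioi_zero_eq_map', Finset.prod_map]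
    rw [← prod_fin_add_one_eq_factorial m]
    refine Finset.prod_congr rfl fun j _ => ?_
    simp only [Fin.coe_succEmb]
    push_cast [Fin.val_succ, Fin.val_zero]
    ring


open scoped Classical in
lemma main_count : ∀ (m : ℕ) (lam : Fin m → ℕ), Monotone lam →
    ((Finset.univ.filter (IsSSYT lam)).card : ℝ)
        * ∏ i : Fin m, ∏ j ∈ Finset.Ioi i, (((j : ℕ) : ℝ) - ((i : ℕ) : ℝ))
      = ∏ i : Fin m, ∏ j ∈ Finset.Ioi i,
          (((lam j + (j : ℕ) : ℕ) : ℝ) - ((lam i + (i : ℕ) : ℕ) : ℝ)) := by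
  intro m
  induction m with
  | zero =>
    intro lam _
    rw [card_ssyt_zero lam]
    simp
  | succ m ih =>
    intro lam hlam
    set a : Fin (m + 1) → ℕ := fun i => lam i + (i : ℕ) with ha_def
    have ha : ∀ i : Fin m, a i.castSucc ≤ a i.succ := by
      intro i
      have h1 : lam i.castSucc ≤ lam i.succ := hlam (Fin.castSucc_lt_succ (i := i)).le
      simp only [ha_def, Fin.coe_castSucc, Fin.val_succ]
      omega
    have hsum : (∑ lam' ∈ Fintype.piFinset (fun i : Fin m =>
          Finset.Icc (lam i.castSucc) (lam i.succ)),
            ((Finset.univ.filter (IsSSYT lam')).card : ℝ)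
              * ∏ i : Fin m, ∏ j ∈ Finset.Ioi i, (((j : ℕ) : ℝ) - ((i : ℕ) : ℝ)))
        = ∑ b ∈ Fintype.piFinset (fun i : Fin m =>
            Finset.Ico (a i.castSucc) (a i.succ)),
            ∏ i : Fin m, ∏ j ∈ Finset.Ioi i, ((b j : ℝ) - (b i : ℝ)) := by
      refine Finset.sum_nbij' (fun lam' => fun k : Fin m => lam' k + (k : ℕ))
        (fun b => fun k : Fin m => b k - (k : ℕ)) ?_ ?_ ?_ ?_ ?_
      · intro lam' hlam'
        rw [Fintype.mem_piFinset] at hlam' ⊢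
        intro k
        have hk := Finset.mem_Icc.mp (hlam' k)
        rw [Finset.mem_Ico]
        simp only [ha_def, Fin.coe_castSucc, Fin.val_succ]
        omega
      · intro b hb
        rw [Fintype.mem_piFinset] at hb ⊢
        intro k
        have hk := Finset.mem_Ico.mp (hb k)
        simp only [ha_def, Fin.coe_castSucc, Fin.val_succ] at hk
        rw [Finset.mem_Icc]
        show lam k.castSucc ≤ b k - (k : ℕ) ∧ b k - (k : ℕ) ≤ lam k.succ
        omega
      · intro lam' _
        funext k
        show lam' k + (k : ℕ) - (k : ℕ) = lam' k
        omega
      · intro b hb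
        rw [Fintype.mem_piFinset] at hb
        funext k
        have hk := Finset.mem_Ico.mp (hb k)
        simp only [ha_def, Fin.coe_castSucc, Fin.val_succ] at hk
        show b k - (k : ℕ) + (k : ℕ) = b k
        omega
      · intro lam' hlam'
        rw [Fintype.mem_piFinset] at hlam'
        have hmono : Monotone lam' := by
          intro i j hij
          rcases eq_or_lt_of_le hij with rfl | hij
          · exact le_refl _
          · have h1 := (Finset.mem_Icc.mp (hlam' i)).2
            have h2 := (Finset.mem_Icc.mp (hlam' j)).1
            have h3 : lam i.succ ≤ lam j.castSucc := hlam (by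
              rw [Fin.le_def]
              simp only [Fin.val_succ, Fin.coe_castSucc]
              exact hij)
            omega
        exact ih lam' hmono
    calc ((Finset.univ.filter (IsSSYT lam)).card : ℝ)
          * ∏ i : Fin (m + 1), ∏ j ∈ Finset.Ioi i, (((j : ℕ) : ℝ) - ((i : ℕ) : ℝ))
        = ((∑ lam' ∈ Fintype.piFinset (fun i : Fin m =>
              Finset.Icc (lam i.castSucc) (lam i.succ)),
              (Finset.univ.filter (IsSSYT lam')).card : ℕ) : ℝ)
            * ((∏ i : Fin m, ∏ j ∈ Finset.Ioi i, (((j : ℕ) : ℝ) - ((i : ℕ) : ℝ)))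
              * (m.factorial : ℝ)) := by
          rw [card_ssyt_rec lam hlam, superfact_succ]
      _ = (∑ lam' ∈ Fintype.piFinset (fun i : Fin m =>
              Finset.Icc (lam i.castSucc) (lam i.succ)),
              ((Finset.univ.filter (IsSSYT lam')).card : ℝ)
                * ∏ i : Fin m, ∏ j ∈ Finset.Ioi i, (((j : ℕ) : ℝ) - ((i : ℕ) : ℝ)))
            * (m.factorial : ℝ) := by
          rw [Nat.cast_sum, Finset.sum_mul, Finset.sum_mul]
          refine Finset.sum_congr rfl fun x _ => ?_
          ring
      _ = (∑ b ∈ Fintype.piFinset (fun i : Fin m =>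
              Finset.Ico (a i.castSucc) (a i.succ)),
              ∏ i : Fin m, ∏ j ∈ Finset.Ioi i, ((b j : ℝ) - (b i : ℝ)))
            * (m.factorial : ℝ) := by rw [hsum]
      _ = ∏ i : Fin (m + 1), ∏ j ∈ Finset.Ioi i, ((a j : ℝ) - (a i : ℝ)) :=
          sum_vandermonde_nat m a ha
      _ = _ := by
          refine Finset.prod_congr rfl fun i _ => Finset.prod_congr rfl fun j _ => ?_
          simp only [ha_def]

open scoped Classical in
theorem card_ssyt_eq_weyl_dimension (m : ℕ) (hm : 0 < m) (lam : Fin m → ℕ)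
    (hlam : Monotone lam) :
    ((Finset.univ.filter (IsSSYT lam)).card : ℝ) =
      (∏ i : Fin m, ∏ j ∈ Finset.Ioi i, (((lam j : ℝ) + (j : ℕ)) - ((lam i : ℝ) + (i : ℕ)))) /
        ∏ i : Fin m, ∏ j ∈ Finset.Ioi i, (((j : ℕ) : ℝ) - ((i : ℕ) : ℝ)) := by
  have h := main_count m lam hlam
  have hSF : (0 : ℝ) < ∏ i : Fin m, ∏ j ∈ Finset.Ioi i, (((j : ℕ) : ℝ) - ((i : ℕ) : ℝ)) := by
    refine Finset.prod_pos fun i _ => Finset.prod_pos fun j hj => ?_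
    have hij : i < j := Finset.mem_Ioi.mp hj
    have hij' : (i : ℕ) < (j : ℕ) := hij
    rw [sub_pos]
    exact_mod_cast hij'
  rw [eq_div_iff (ne_of_gt hSF)]
  push_cast at h ⊢
  convert h using 2
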